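/- Let y: [0,∞) → [0,∞) be C¹ with ∫₀^∞ y(t) dt < ∞, and suppose there are constants C₁ > 0 and ε > 0 with the property: whenever t₀ ≤ t₁ satisfy y(t₀) ≤ ε and y(t) ≤ 3ε on [t₀,t₁], then y'(t) ≤ C₁(y(t)² + y(t)) on [t₀,t₁]. If moreover for every ε > 0 there exists t₀ with y(t₀) ≤ ε and C₁(1+3ε)∫_{t₀}^∞ y(t) dt ≤ ε, then y(t) → 0 as t → ∞. -/

import Mathlib

open MeasureTheory Set

/-- Abstract ODE/continuity argument: an integrable nonnegative `C¹` quantity `y`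
satisfying the differential inequality `y' ≤ C₁(y² + y)` on intervals where it stays
below `3ε`, and which can be made small with small tail integral, tends to `0`. -/
theorem stmt19 (y : ℝ → ℝ) (hy : ContDiff ℝ 1 y)
    (hpos : ∀ t : ℝ, 0 ≤ t → 0 ≤ y t)
    (hint : IntegrableOn y (Set.Ici (0:ℝ)))
    (C₁ ε : ℝ) (hC : 0 < C₁) (hε : 0 < ε)
    (hdiff : ∀ t₀ t₁ : ℝ, 0 ≤ t₀ → t₀ ≤ t₁ → y t₀ ≤ ε →
      (∀ t ∈ Set.Icc t₀ t₁, y t ≤ 3 * ε) →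
      ∀ t ∈ Set.Icc t₀ t₁, deriv y t ≤ C₁ * ((y t)^2 + y t))
    (hsmall : ∀ ε' > (0:ℝ), ∃ t₀ ≥ (0:ℝ), y t₀ ≤ ε' ∧
      C₁ * (1 + 3 * ε') * (∫ t in Set.Ioi t₀, y t) ≤ ε') :
    Filter.Tendsto y Filter.atTop (nhds 0) := by
  have hycont : Continuous y := hy.continuous
  rw [Metric.tendsto_atTop]
  intro δ hδ
  set ε' := min ε (δ / 3) with hε'def
  have hε'pos : 0 < ε' := lt_min hε (by linarith)
  have hε'le : ε' ≤ ε := min_le_left _ _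
  have h3ε' : 3 * ε' ≤ δ := by
    have := min_le_right ε (δ / 3); linarith [this]
  obtain ⟨t₀, ht₀0, hyt₀, htail⟩ := hsmall ε' hε'pos
  -- Claim: for all t ≥ t₀, y t < 3 * ε'
  have key : ∀ t ≥ t₀, y t < 3 * ε' := by
    by_contra h
    push_neg at h
    obtain ⟨s, hs, hys⟩ := h
    set S : Set ℝ := {t | t₀ ≤ t ∧ 3 * ε' ≤ y t} with hSdef
    have hSne : S.Nonempty := ⟨s, hs, hys⟩
    have hSbd : BddBelow S := ⟨t₀, fun x hx => hx.1⟩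
    have hSclosed : IsClosed S := by
      have : S = Ici t₀ ∩ y ⁻¹' (Ici (3 * ε')) := by
        ext x; simp [hSdef, Set.mem_preimage]
      rw [this]
      exact isClosed_Ici.inter (isClosed_Ici.preimage hycont)
    set t₁ := sInf S with ht₁def
    have ht₁mem : t₁ ∈ S := hSclosed.csInf_mem hSne hSbd
    have ht₀t₁ : t₀ ≤ t₁ := ht₁mem.1
    have ht₁lb : ∀ x ∈ Ico t₀ t₁, y x < 3 * ε' := by
      intro x hx
      by_contra hc
      push_neg at hc
      exact absurd (csInf_le hSbd ⟨hx.1, hc⟩) (not_le.mpr hx.2)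
    have ht₀lt : t₀ < t₁ := by
      rcases lt_or_eq_of_le ht₀t₁ with h | h
      · exact h
      · exfalso; rw [← h] at ht₁mem; linarith [ht₁mem.2, hyt₀]
    -- y t₁ ≤ 3ε' by continuity from the left
    have hyt₁le : y t₁ ≤ 3 * ε' := by
      have hcl : t₁ ∈ closure (Ico t₀ t₁) := by
        rw [closure_Ico (ne_of_lt ht₀lt)]; exact ⟨ht₀t₁, le_rfl⟩
      haveI hne : Filter.NeBot (nhdsWithin t₁ (Ico t₀ t₁)) :=
        mem_closure_iff_nhdsWithin_neBot.mp hcl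
      refine le_of_tendsto
        (hycont.continuousWithinAt : ContinuousWithinAt y (Ico t₀ t₁) t₁) ?_
      filter_upwards [self_mem_nhdsWithin] with x hx
      exact le_of_lt (ht₁lb x hx)
    have hbound : ∀ t ∈ Icc t₀ t₁, y t ≤ 3 * ε' := by
      intro t ht
      rcases lt_or_eq_of_le ht.2 with h | h
      · exact le_of_lt (ht₁lb t ⟨ht.1, h⟩)
      · rw [h]; exact hyt₁le
    have hbound3 : ∀ t ∈ Icc t₀ t₁, y t ≤ 3 * ε := by
      intro t ht; have := hbound t ht; linarith
    have hderiv := hdiff t₀ t₁ ht₀0 ht₀t₁ (hyt₀.trans hε'le) hbound3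
    have hderiv' : ∀ t ∈ Icc t₀ t₁, deriv y t ≤ C₁ * (1 + 3 * ε') * y t := by
      intro t ht
      have hy0 : 0 ≤ y t := hpos t (ht₀0.trans ht.1)
      have hsq : (y t)^2 ≤ 3 * ε' * y t := by
        have := hbound t ht
        nlinarith
      calc deriv y t ≤ C₁ * ((y t)^2 + y t) := hderiv t ht
        _ ≤ C₁ * (3 * ε' * y t + y t) := by nlinarith
        _ = C₁ * (1 + 3 * ε') * y t := by ring
    -- FTC
    have hdc : Continuous (deriv y) := (hy.iterate_deriv' 0 1).continuous
    have hftc : ∫ t in t₀..t₁, deriv y t = y t₁ - y t₀ :=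
      intervalIntegral.integral_deriv_eq_sub
        (fun t _ => (hy.differentiable one_ne_zero).differentiableAt)
        (hdc.intervalIntegrable _ _)
    have hintIoi : IntegrableOn y (Ioi t₀) :=
      hint.mono_set (fun x hx => le_of_lt (lt_of_le_of_lt ht₀0 hx))
    have hmono : ∫ t in t₀..t₁, deriv y t ≤
        ∫ t in t₀..t₁, C₁ * (1 + 3 * ε') * y t := by
      apply intervalIntegral.integral_mono_on ht₀t₁
        (hdc.intervalIntegrable _ _)
        ((hycont.intervalIntegrable _ _).const_mul _)
      exact hderiv'
    have hconst : ∫ t in t₀..t₁, C₁ * (1 + 3 * ε') * y t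
        = C₁ * (1 + 3 * ε') * ∫ t in t₀..t₁, y t := by
      rw [intervalIntegral.integral_const_mul]
    have hsub : ∫ t in t₀..t₁, y t ≤ ∫ t in Ioi t₀, y t := by
      rw [intervalIntegral.integral_of_le ht₀t₁]
      apply setIntegral_mono_set hintIoi
      · filter_upwards [self_mem_ae_restrict measurableSet_Ioi] with x hx
        exact hpos x (ht₀0.trans (le_of_lt hx))
      · exact Filter.Eventually.of_forall Ioc_subset_Ioi_self
    have hCpos : 0 < C₁ * (1 + 3 * ε') := by nlinarith
    have : y t₁ - y t₀ ≤ ε' := by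
      calc y t₁ - y t₀ = ∫ t in t₀..t₁, deriv y t := hftc.symm
        _ ≤ C₁ * (1 + 3 * ε') * ∫ t in t₀..t₁, y t := by rw [← hconst]; exact hmono
        _ ≤ C₁ * (1 + 3 * ε') * ∫ t in Ioi t₀, y t :=
            mul_le_mul_of_nonneg_left hsub (le_of_lt hCpos)
        _ ≤ ε' := htail
    linarith [ht₁mem.2, hyt₀]
  refine ⟨t₀, fun t ht => ?_⟩
  have h0t : (0:ℝ) ≤ t := ht₀0.trans ht
  rw [Real.dist_eq, sub_zero, abs_of_nonneg (hpos t h0t)]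
  exact lt_of_lt_of_le (key t ht) h3ε'
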